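/- Let E be a complex Banach space and let 𝓚♯(E) denote the unital subalgebra of 𝓑(E) generated by the compact operators, i.e., 𝓚♯(E) = {λ·id_E + K : λ ∈ ℂ, K ∈ 𝓚(E)}, regarded as a Banach algebra with the operator norm. Then the set of invertible elements of 𝓚♯(E) is dense in 𝓚♯(E) (i.e., tsr 𝓚♯(E) = 1), and consequently multiplication in 𝓚♯(E) is weakly open. -/

import Mathlib

open Pointwise

set_option synthInstance.maxHeartbeats 800000

/-- The unital subalgebra `𝓚♯(E) = {λ·id + K : λ ∈ ℂ, K compact}` of `𝓑(E)` generated by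
the compact operators on a complex Banach space `E`. -/
noncomputable def KSharp (E : Type*) [NormedAddCommGroup E] [NormedSpace ℂ E] :
    Subalgebra ℂ (E →L[ℂ] E) where
  carrier := {T | ∃ (c : ℂ) (K : E →L[ℂ] E),
    IsCompactOperator K ∧ T = c • (1 : E →L[ℂ] E) + K}
  mul_mem' := by
    rintro T S ⟨c, K, hK, rfl⟩ ⟨d, L, hL, rfl⟩
    refine ⟨c * d, c • L + d • K + K * L, ?_, ?_⟩
    · have h1 : IsCompactOperator (⇑(c • L) : E → E) := by
        have := hL.smul c
        simpa using this
      have h2 : IsCompactOperator (⇑(d • K) : E → E) := by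
        have := hK.smul d
        simpa using this
      have h3 : IsCompactOperator (⇑(K * L) : E → E) := by
        have := hK.comp_clm L
        simpa [Function.comp] using this
      simpa using (h1.add h2).add h3
    · simp only [mul_add, add_mul, smul_mul_assoc, mul_smul_comm, one_mul, mul_one,
        smul_add, smul_smul, mul_comm d c]
      abel
  add_mem' := by
    rintro T S ⟨c, K, hK, rfl⟩ ⟨d, L, hL, rfl⟩
    refine ⟨c + d, K + L, ?_, ?_⟩
    · have := hK.add hL
      simpa using this
    · simp only [add_smul]
      abel
  algebraMap_mem' := fun r =>
    ⟨r, 0, isCompactOperator_zero, by simp [Algebra.algebraMap_eq_smul_one]⟩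


set_option maxHeartbeats 2000000

section Aux

variable {E : Type*} [NormedAddCommGroup E] [NormedSpace ℂ E]

private lemma eigen_finite (K : E →L[ℂ] E) (hK : IsCompactOperator K) {δ : ℝ} (hδ : 0 < δ) :
    {z : ℂ | δ ≤ ‖z‖ ∧ ∃ v : E, v ≠ 0 ∧ K v = z • v}.Finite := by
  by_contra hfin
  rw [← Set.not_infinite, not_not] at hfin
  let f := hfin.natEmbedding
  set lam : ℕ → ℂ := fun n => (f n : ℂ) with hlam
  have hlaminj : Function.Injective lam := fun a b h => f.injective (Subtype.ext h)
  have hlamδ : ∀ n, δ ≤ ‖lam n‖ := fun n => (f n).2.1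
  have hlamne : ∀ n, lam n ≠ 0 := fun n h => by
    have := hlamδ n; rw [h] at this; simp at this; linarith
  choose v hv0 hKv using fun n => (f n).2.2
  have hKv : ∀ n, K (v n) = lam n • v n := hKv
  -- linear independence
  have hli : LinearIndependent ℂ v := by
    apply Module.End.eigenvectors_linearIndependent' (K : E →ₗ[ℂ] E) lam hlaminj
    intro i
    refine ⟨?_, hv0 i⟩
    rw [Module.End.mem_eigenspace_iff]
    exact hKv i
  -- the nested subspaces
  set F : ℕ → Submodule ℂ E := fun n => Submodule.span ℂ (v '' {i | i < n}) with hF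
  have hFfin : ∀ n, FiniteDimensional ℂ (F n) := fun n =>
    FiniteDimensional.span_of_finite ℂ ((Set.finite_Iio n).image v)
  have hFmono : Monotone F := fun a b hab =>
    Submodule.span_mono (Set.image_mono fun i (hi : i < a) => lt_of_lt_of_le hi hab)
  have hvF : ∀ n, v n ∈ F (n + 1) :=
    fun n => Submodule.subset_span ⟨n, Nat.lt_succ_self n, rfl⟩
  have hvnF : ∀ n, v n ∉ F n := fun n =>
    hli.notMem_span_image (by simp)
  -- K-invariance
  have hKF : ∀ n, ∀ x ∈ F n, K x ∈ F n := by
    intro n x hx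
    refine Submodule.span_induction ?_ ?_ ?_ ?_ hx
    · rintro _ ⟨i, hi, rfl⟩
      rw [hKv i]
      exact Submodule.smul_mem (F n) _ (Submodule.subset_span (Set.mem_image_of_mem v hi))
    · simp
    · intro a b _ _ ha hb; rw [map_add]; exact Submodule.add_mem _ ha hb
    · intro r a _ ha; rw [map_smul]; exact Submodule.smul_mem _ _ ha
  have hshift : ∀ n, ∀ x ∈ F (n + 1), lam n • x - K x ∈ F n := by
    intro n x hx
    refine Submodule.span_induction ?_ ?_ ?_ ?_ hx
    · rintro _ ⟨i, hi, rfl⟩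
      rw [hKv i, ← sub_smul]
      rcases eq_or_lt_of_le (Nat.lt_succ_iff.mp hi) with h | h
      · subst h; simp
      · exact Submodule.smul_mem (F n) _ (Submodule.subset_span (Set.mem_image_of_mem v h))
    · simp
    · intro a b _ _ ha hb
      have hab : lam n • (a + b) - K (a + b) = (lam n • a - K a) + (lam n • b - K b) := by
        rw [map_add, smul_add]; abel
      rw [hab]; exact Submodule.add_mem _ ha hb
    · intro r a _ ha
      have hra : lam n • (r • a) - K (r • a) = r • (lam n • a - K a) := by
        rw [map_smul, smul_sub, smul_comm]
      rw [hra]; exact Submodule.smul_mem _ _ ha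
  -- Riesz sequence
  have hriesz : ∀ n : ℕ, ∃ u : E, u ∈ F (n + 1) ∧ ‖u‖ = 1 ∧ ∀ y ∈ F n, (1:ℝ)/2 ≤ ‖u - y‖ := by
    intro n
    haveI := hFfin (n + 1)
    set G : Submodule ℂ (F (n + 1)) := (F n).comap (F (n + 1)).subtype with hG
    have hGclosed : IsClosed (G : Set (F (n + 1))) := Submodule.closed_of_finiteDimensional G
    have hGne : ∃ x : F (n + 1), x ∉ G := by
      exact ⟨⟨v n, hvF n⟩, fun h => hvnF n h⟩
    obtain ⟨x₀, hx₀G, hx₀⟩ := riesz_lemma hGclosed hGne (show (1:ℝ)/2 < 1 by norm_num)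
    have hx₀ne : x₀ ≠ 0 := fun h => hx₀G (h ▸ G.zero_mem)
    have hnx₀ : (0:ℝ) < ‖(x₀:E)‖ := by
      rw [norm_pos_iff]
      exact fun h => hx₀ne (Subtype.ext h)
    have hnorm_eq : ‖x₀‖ = ‖(x₀:E)‖ := rfl
    refine ⟨‖(x₀:E)‖⁻¹ • (x₀ : E), ?_, ?_, ?_⟩
    · exact Submodule.smul_mem _ _ x₀.2
    · rw [norm_smul]; simp [hnx₀.ne']
    · intro y hy
      have hyF : ‖(x₀:E)‖ • y ∈ F n := Submodule.smul_mem _ _ hy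
      have hyF' : (‖(x₀:E)‖ • y) ∈ F (n+1) := hFmono (Nat.le_succ n) hyF
      have key : (1:ℝ)/2 * ‖x₀‖ ≤ ‖x₀ - ⟨‖(x₀:E)‖ • y, hyF'⟩‖ := hx₀ ⟨‖(x₀:E)‖ • y, hyF'⟩ hyF
      have key' : (1:ℝ)/2 * ‖(x₀:E)‖ ≤ ‖(x₀ : E) - ‖(x₀:E)‖ • y‖ := key
      calc (1:ℝ)/2 = ‖(x₀:E)‖⁻¹ * ((1:ℝ)/2 * ‖(x₀:E)‖) := by
            rw [← mul_assoc, mul_comm _ ((1:ℝ)/2), mul_assoc,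
              inv_mul_cancel₀ hnx₀.ne', mul_one]
      _ ≤ ‖(x₀:E)‖⁻¹ * ‖(x₀:E) - ‖(x₀:E)‖ • y‖ := by
          apply mul_le_mul_of_nonneg_left key' (by positivity)
      _ = ‖‖(x₀:E)‖⁻¹ • ((x₀:E) - ‖(x₀:E)‖ • y)‖ := by
          rw [norm_smul]; simp
      _ = ‖‖(x₀:E)‖⁻¹ • (x₀:E) - y‖ := by
          rw [smul_sub, smul_smul, inv_mul_cancel₀ hnx₀.ne', one_smul]
  choose u huF hu1 hudist using hriesz
  -- the separated sequence
  set y : ℕ → E := fun n => (lam n)⁻¹ • u n with hy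
  have hybound : ∀ n, ‖y n‖ ≤ δ⁻¹ := by
    intro n
    rw [hy]
    simp only [norm_smul, norm_inv, hu1, mul_one]
    exact inv_anti₀ hδ (hlamδ n)
  have hsep : ∀ m n, m < n → (1:ℝ)/2 ≤ ‖K (y n) - K (y m)‖ := by
    intro m n hmn
    have h1 : (lam n)⁻¹ • (lam n • u n - K (u n)) ∈ F n :=
      Submodule.smul_mem _ _ (hshift n _ (huF n))
    have h2 : (lam m)⁻¹ • K (u m) ∈ F n := by
      apply Submodule.smul_mem
      exact hFmono hmn (hKF (m+1) _ (huF m))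
    have hw : u n - ((lam n)⁻¹ • (lam n • u n - K (u n)) + (lam m)⁻¹ • K (u m))
        = K (y n) - K (y m) := by
      rw [hy]
      simp only [map_smul, smul_sub, smul_smul, inv_mul_cancel₀ (hlamne n), one_smul]
      abel
    rw [← hw]
    exact hudist n _ (Submodule.add_mem _ h1 h2)
  -- contradiction with compactness
  obtain ⟨C, hCcomp, hCV⟩ := hK
  obtain ⟨ε, hε, hball⟩ := Metric.mem_nhds_iff.mp hCV
  set c : ℝ := (ε/2) * δ with hc
  have hcpos : 0 < c := by positivity
  have hKz : ∀ n, K ((c:ℂ) • y n) ∈ C := by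
    intro n
    apply hball
    rw [Metric.mem_ball, dist_zero_right, norm_smul]
    calc ‖(c:ℂ)‖ * ‖y n‖ ≤ c * δ⁻¹ := by
          apply mul_le_mul (le_of_eq (by rw [Complex.norm_real, Real.norm_eq_abs, abs_of_pos hcpos])) (hybound n) (norm_nonneg _) hcpos.le
    _ < ε := by
          rw [hc, mul_assoc, mul_inv_cancel₀ hδ.ne', mul_one]
          linarith
  obtain ⟨a, -, φ, hφ, hconv⟩ := hCcomp.tendsto_subseq hKz
  have hcauchy := hconv.cauchySeq
  rw [Metric.cauchySeq_iff] at hcauchy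
  obtain ⟨N, hN⟩ := hcauchy (c * (1/2)) (by positivity)
  have hlt := hN (N+1) (Nat.le_succ N) N le_rfl
  simp only [Function.comp_apply] at hlt
  have key := hsep (φ N) (φ (N+1)) (hφ (Nat.lt_succ_self N))
  have hnorm : dist (K ((c:ℂ) • y (φ (N+1)))) (K ((c:ℂ) • y (φ N)))
      = c * ‖K (y (φ (N+1))) - K (y (φ N))‖ := by
    simp only [dist_eq_norm, map_smul, ← smul_sub, norm_smul, Complex.norm_real,
      Real.norm_eq_abs, abs_of_pos hcpos]
  have hge : c * (1/2) ≤ dist (K ((c:ℂ) • y (φ (N+1)))) (K ((c:ℂ) • y (φ N))) := by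
    rw [hnorm]
    exact mul_le_mul_of_nonneg_left key hcpos.le
  linarith

private lemma frontier_eigen [CompleteSpace E] (K : E →L[ℂ] E) (hK : IsCompactOperator K) {l : ℂ}
    (hl : l ∈ frontier (spectrum ℂ K)) (hl0 : l ≠ 0) :
    ∃ v : E, v ≠ 0 ∧ K v = l • v := by
  have hlσ : l ∈ spectrum ℂ K :=
    (spectrum.isClosed (𝕜 := ℂ) K).closure_eq ▸ frontier_subset_closure hl
  have hA : Nontrivial (E →L[ℂ] E) := by
    by_contra h
    rw [not_nontrivial_iff_subsingleton] at h
    exact (spectrum.mem_iff.mp hlσ) (isUnit_of_subsingleton _)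
  -- a sequence in the complement converging to l
  have hlc : l ∈ closure (spectrum ℂ K)ᶜ := by
    rw [frontier_eq_closure_inter_closure] at hl
    exact hl.2
  obtain ⟨μ, hμmem, hμlim⟩ := mem_closure_iff_seq_limit.mp hlc
  -- approximate eigenvectors
  have hxk : ∀ k : ℕ, ∃ x : E, ‖x‖ = 1 ∧ ‖l • x - K x‖ ≤ 3 * ‖l - μ k‖ := by
    intro k
    have hUk : IsUnit (algebraMap ℂ (E →L[ℂ] E) (μ k) - K) :=
      spectrum.notMem_iff.mp (hμmem k)
    obtain ⟨U, hU⟩ := hUk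
    set R : E →L[ℂ] E := (↑U⁻¹ : E →L[ℂ] E) with hR
    have hRpos : (0:ℝ) < ‖R‖ := Units.norm_pos U⁻¹
    have hlμ : l ≠ μ k := fun h => hμmem k (h ▸ hlσ)
    have hlμpos : 0 < ‖l - μ k‖ := by
      rw [norm_pos_iff, sub_ne_zero]; exact hlμ
    -- resolvent norm blowup
    have hRnorm : ‖l - μ k‖⁻¹ ≤ ‖R‖ := by
      by_contra hcon
      push_neg at hcon
      rw [lt_inv_comm₀ hRpos hlμpos] at hcon
      have hdist : ‖(algebraMap ℂ (E →L[ℂ] E) l - K) - ↑U‖ < ‖R‖⁻¹ := by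
        rw [hU]
        have h1 : (algebraMap ℂ (E →L[ℂ] E) l - K) - (algebraMap ℂ (E →L[ℂ] E) (μ k) - K)
            = algebraMap ℂ (E →L[ℂ] E) (l - μ k) := by
          rw [map_sub]; abel
        rw [h1]
        refine lt_of_le_of_lt ?_ hcon
        rw [Algebra.algebraMap_eq_smul_one, norm_smul]
        calc ‖l - μ k‖ * ‖(1 : E →L[ℂ] E)‖ ≤ ‖l - μ k‖ * 1 :=
              mul_le_mul_of_nonneg_left ContinuousLinearMap.norm_id_le (norm_nonneg _)
        _ = ‖l - μ k‖ := mul_one _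
      exact (spectrum.mem_iff.mp hlσ) (U.ofNearby _ hdist).isUnit
    have hRinv : ‖R‖⁻¹ ≤ ‖l - μ k‖ := by
      rw [inv_le_comm₀ hRpos hlμpos]
      exact hRnorm
    -- pick a near-maximizing vector
    obtain ⟨w, hw1, hw2⟩ := R.exists_lt_apply_of_lt_opNorm (half_lt_self hRpos)
    have hRwpos : (0:ℝ) < ‖R w‖ := lt_of_le_of_lt (by positivity) hw2
    set x : E := ((‖R w‖ : ℂ))⁻¹ • R w with hx
    have hxnorm : ‖x‖ = 1 := by
      rw [hx, norm_smul, norm_inv, Complex.norm_real, Real.norm_eq_abs,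
        abs_of_pos hRwpos, inv_mul_cancel₀ hRwpos.ne']
    have hUx : (algebraMap ℂ (E →L[ℂ] E) (μ k) - K) x = ((‖R w‖ : ℂ))⁻¹ • w := by
      rw [hx, map_smul]
      congr 1
      have := congrFun (congrArg (fun (T : E →L[ℂ] E) => (T : E → E)) U.mul_inv) w
      simpa [hU] using this
    have hμx : μ k • x - K x = ((‖R w‖ : ℂ))⁻¹ • w := by
      rw [← hUx]
      simp [Algebra.algebraMap_eq_smul_one, ContinuousLinearMap.sub_apply]
    refine ⟨x, hxnorm, ?_⟩
    have hsplit : l • x - K x = (l - μ k) • x + (μ k • x - K x) := by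
      rw [sub_smul]; abel
    rw [hsplit, hμx]
    calc ‖(l - μ k) • x + ((‖R w‖ : ℂ))⁻¹ • w‖
        ≤ ‖(l - μ k) • x‖ + ‖((‖R w‖ : ℂ))⁻¹ • w‖ := norm_add_le _ _
    _ ≤ ‖l - μ k‖ + ‖R w‖⁻¹ := by
        apply add_le_add
        · rw [norm_smul, hxnorm, mul_one]
        · rw [norm_smul, norm_inv, Complex.norm_real, Real.norm_eq_abs, abs_of_pos hRwpos]
          calc ‖R w‖⁻¹ * ‖w‖ ≤ ‖R w‖⁻¹ * 1 :=
                mul_le_mul_of_nonneg_left hw1.le (by positivity)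
          _ = ‖R w‖⁻¹ := mul_one _
    _ ≤ ‖l - μ k‖ + 2 * ‖l - μ k‖ := by
        apply add_le_add le_rfl
        have h2 : ‖R w‖⁻¹ ≤ 2 * ‖R‖⁻¹ := by
          have heq : (‖R‖/2)⁻¹ = 2 * ‖R‖⁻¹ := by
            rw [div_eq_mul_inv, mul_inv, inv_inv, mul_comm]
          rw [← heq]
          exact inv_anti₀ (by positivity) hw2.le
        calc ‖R w‖⁻¹ ≤ 2 * ‖R‖⁻¹ := h2
        _ ≤ 2 * ‖l - μ k‖ := by linarith
    _ = 3 * ‖l - μ k‖ := by ring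
  choose x hxnorm hxapprox using hxk
  -- limits
  have hdiff0 : Filter.Tendsto (fun k => l • x k - K (x k)) Filter.atTop (nhds 0) := by
    rw [tendsto_zero_iff_norm_tendsto_zero]
    have hμ0 : Filter.Tendsto (fun k => 3 * ‖l - μ k‖) Filter.atTop (nhds 0) := by
      have := (tendsto_const_nhds (x := l)).sub hμlim
      rw [sub_self] at this
      have hn := this.norm
      rw [norm_zero] at hn
      simpa using hn.const_mul 3
    exact squeeze_zero (fun k => norm_nonneg _) hxapprox hμ0
  -- compactness
  obtain ⟨C, hCcomp, hCV⟩ := hK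
  obtain ⟨ε, hε, hball⟩ := Metric.mem_nhds_iff.mp hCV
  have hKz : ∀ k, K (((ε/2 : ℝ) : ℂ) • x k) ∈ C := by
    intro k
    apply hball
    rw [Metric.mem_ball, dist_zero_right, norm_smul, hxnorm, mul_one, Complex.norm_real,
      Real.norm_eq_abs, abs_of_pos (by linarith)]
    linarith
  obtain ⟨a, -, φ, hφ, hconv⟩ := hCcomp.tendsto_subseq hKz
  have hKx : Filter.Tendsto (fun j => K (x (φ j))) Filter.atTop
      (nhds ((((ε/2 : ℝ) : ℂ))⁻¹ • a)) := by
    have := hconv.const_smul ((((ε/2 : ℝ) : ℂ))⁻¹)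
    have hne : (((ε/2 : ℝ) : ℂ)) ≠ 0 := by
      simp only [ne_eq, Complex.ofReal_eq_zero]
      linarith
    simp only [Function.comp_def, map_smul, smul_smul, inv_mul_cancel₀ hne, one_smul] at this
    exact this
  set zlim : E := (((ε/2 : ℝ) : ℂ))⁻¹ • a with hzlim
  have hlx : Filter.Tendsto (fun j => l • x (φ j)) Filter.atTop (nhds zlim) := by
    have h1 := (hdiff0.comp (hφ.tendsto_atTop)).add hKx
    simp only [Function.comp_def, sub_add_cancel, zero_add] at h1
    exact h1
  have hxlim : Filter.Tendsto (fun j => x (φ j)) Filter.atTop (nhds (l⁻¹ • zlim)) := by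
    have := hlx.const_smul (l⁻¹)
    simpa [smul_smul, inv_mul_cancel₀ hl0] using this
  refine ⟨l⁻¹ • zlim, ?_, ?_⟩
  · have hn : Filter.Tendsto (fun j => ‖x (φ j)‖) Filter.atTop (nhds ‖l⁻¹ • zlim‖) :=
      hxlim.norm
    have hone : Filter.Tendsto (fun _ : ℕ => (1:ℝ)) Filter.atTop (nhds ‖l⁻¹ • zlim‖) := by
      simpa [hxnorm] using hn
    have := tendsto_nhds_unique hone tendsto_const_nhds
    intro h0
    rw [h0, norm_zero] at this
    norm_num at this
  · have hK1 : Filter.Tendsto (fun j => K (x (φ j))) Filter.atTop (nhds (K (l⁻¹ • zlim))) :=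
      (K.continuous.tendsto _).comp hxlim
    have hK2 := tendsto_nhds_unique hK1 hKx
    rw [hK2, hzlim]
    rw [smul_smul, mul_inv_cancel₀ hl0, one_smul]

private lemma interior_spectrum_empty [CompleteSpace E] (K : E →L[ℂ] E) (hK : IsCompactOperator K) :
    interior (spectrum ℂ K) = ∅ := by
  by_contra hne
  obtain ⟨a, ha⟩ := Set.nonempty_iff_ne_empty.mpr hne
  obtain ⟨r, hr, hball⟩ := Metric.isOpen_iff.mp isOpen_interior a ha
  have hballσ : Metric.ball a r ⊆ spectrum ℂ K := hball.trans interior_subset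
  -- the countable set of nonzero eigenvalues
  set Eig : Set ℂ := {z : ℂ | z ≠ 0 ∧ ∃ v : E, v ≠ 0 ∧ K v = z • v} with hEig
  have hEigC : Eig.Countable := by
    have hsub : Eig ⊆ ⋃ n : ℕ, {z : ℂ | 1/(n+1) ≤ ‖z‖ ∧ ∃ v : E, v ≠ 0 ∧ K v = z • v} := by
      rintro z ⟨hz0, hv⟩
      have hz : 0 < ‖z‖ := norm_pos_iff.mpr hz0
      obtain ⟨n, hn⟩ := exists_nat_one_div_lt hz
      exact Set.mem_iUnion.mpr ⟨n, hn.le, hv⟩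
    exact Set.Countable.mono hsub
      (Set.countable_iUnion fun n =>
        (eigen_finite K hK (by positivity : (0:ℝ) < 1/((n:ℝ)+1))).countable)
  -- bound on the spectrum
  obtain ⟨M, hM⟩ := (spectrum.isBounded (𝕜 := ℂ) K).subset_closedBall 0
  -- the map t ↦ rightmost point of the spectrum on the horizontal line at height a.im + t
  set S : ℝ → Set ℝ := fun t => {s : ℝ | a + s + t * Complex.I ∈ spectrum ℂ K} with hSdef
  set g : ℝ → ℂ := fun t => a + (sSup (S t) : ℝ) + t * Complex.I with hg
  have hmem : ∀ t : ℝ, |t| < r → g t ∈ frontier (spectrum ℂ K) := by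
    intro t ht
    have hSne : (S t).Nonempty := by
      refine ⟨0, hballσ ?_⟩
      rw [Metric.mem_ball]
      have h0 : a + ((0:ℝ):ℂ) + t * Complex.I - a = t * Complex.I := by push_cast; ring
      rw [dist_eq_norm, h0]
      simpa using ht
    have hSbdd : BddAbove (S t) := by
      refine ⟨M + ‖a‖ + |t|, fun s hs => ?_⟩
      have h1 := hM hs
      rw [Metric.mem_closedBall, dist_zero_right] at h1
      have h2 : (s:ℝ) = ((a + s + t * Complex.I) - a - t * Complex.I).re := by simp
      calc s = ((a + s + t * Complex.I) - a - t * Complex.I).re := h2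
      _ ≤ ‖(a + s + t * Complex.I) - a - t * Complex.I‖ := Complex.re_le_norm _
      _ ≤ ‖a + s + t * Complex.I‖ + ‖a‖ + ‖t * Complex.I‖ := by
          refine le_trans (norm_sub_le _ _) ?_
          gcongr
          exact norm_sub_le _ _
      _ ≤ M + ‖a‖ + |t| := by
          gcongr
          simp
    have hSclosed : IsClosed (S t) := by
      have heq : S t = (fun s : ℝ => a + (s:ℂ) + t * Complex.I) ⁻¹' (spectrum ℂ K) := rfl
      rw [heq]
      exact (spectrum.isClosed K).preimage (by continuity)
    have hsup : sSup (S t) ∈ S t := hSclosed.csSup_mem hSne hSbdd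
    rw [frontier_eq_closure_inter_closure]
    constructor
    · exact subset_closure hsup
    · rw [mem_closure_iff_seq_limit]
      refine ⟨fun n => a + ((sSup (S t) + 1/(n+1) : ℝ) : ℂ) + t * Complex.I, ?_, ?_⟩
      · intro n
        intro hc
        have : (sSup (S t) + 1/(n+1) : ℝ) ∈ S t := hc
        have hle := le_csSup hSbdd this
        have : (0:ℝ) < 1/((n:ℝ)+1) := by positivity
        linarith
      · have h1 : Filter.Tendsto (fun n : ℕ => (sSup (S t) + 1/(n+1) : ℝ))
            Filter.atTop (nhds (sSup (S t))) := by
          have := tendsto_one_div_add_atTop_nhds_zero_nat (𝕜 := ℝ)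
          have h2 := this.const_add (sSup (S t))
          simpa using h2
        have hcont : Continuous (fun s : ℝ => a + (s:ℂ) + t * Complex.I) := by continuity
        exact (hcont.tendsto _).comp h1
  -- injectivity and nonvanishing
  have him : ∀ t : ℝ, (g t).im = a.im + t := by
    intro t
    simp [hg]
  have hinj : Set.InjOn g (Set.Ioo (-r) r \ {-a.im}) := by
    intro s hs t ht hst
    have := congrArg Complex.im hst
    rw [him s, him t] at this
    linarith
  have hmapsto : Set.MapsTo g (Set.Ioo (-r) r \ {-a.im}) Eig := by
    rintro t ⟨ht, ht0⟩
    have habs : |t| < r := abs_lt.mpr ⟨ht.1, ht.2⟩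
    have hfr := hmem t habs
    have hne0 : g t ≠ 0 := by
      intro h0
      apply ht0
      have := him t
      rw [h0] at this
      simp only [Complex.zero_im] at this
      simp only [Set.mem_singleton_iff]
      linarith
    obtain ⟨v, hv0, hKv⟩ := frontier_eigen K hK hfr hne0
    exact ⟨hne0, v, hv0, hKv⟩
  have hcnt : (Set.Ioo (-r) r \ {-a.im} : Set ℝ).Countable :=
    hmapsto.countable_of_injOn hinj hEigC
  have hcnt2 : (Set.Ioo (-r) r : Set ℝ).Countable := by
    have : (Set.Ioo (-r) r : Set ℝ) ⊆ (Set.Ioo (-r) r \ {-a.im}) ∪ {-a.im} := by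
      intro x hx
      by_cases hx0 : x = -a.im
      · exact Or.inr hx0
      · exact Or.inl ⟨hx, hx0⟩
    exact Set.Countable.mono this (hcnt.union (Set.countable_singleton _))
  have := Cardinal.mk_Ioo_real (show -r < r by linarith)
  rw [← Cardinal.le_aleph0_iff_set_countable] at hcnt2
  rw [this] at hcnt2
  exact absurd hcnt2 (not_le.mpr Cardinal.aleph0_lt_continuum)

private -- density of good scalars
lemma exists_good_scalar [CompleteSpace E] (K : E →L[ℂ] E) (hK : IsCompactOperator K)
    (c : ℂ) {ε : ℝ} (hε : 0 < ε) :
    ∃ c' : ℂ, c' ≠ 0 ∧ IsUnit (c' • (1 : E →L[ℂ] E) + K) ∧ ‖c' - c‖ < ε := by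
  have hKneg : IsCompactOperator (⇑(-K) : E → E) := by
    have := hK.neg
    simpa using this
  have hD : Dense (spectrum ℂ (-K))ᶜ :=
    interior_eq_empty_iff_dense_compl.mp (interior_spectrum_empty (-K) hKneg)
  obtain ⟨c₀, hc₀mem, hc₀dist⟩ := hD.exists_dist_lt c (half_pos hε)
  have hcompl_open : IsOpen (spectrum ℂ (-K))ᶜ := (spectrum.isClosed (𝕜 := ℂ) (-K)).isOpen_compl
  -- perturb c₀ to be nonzero while staying in the complement
  obtain ⟨c', hc'ne, hc'mem, hc'dist⟩ :
      ∃ c' : ℂ, c' ≠ 0 ∧ c' ∈ (spectrum ℂ (-K))ᶜ ∧ dist c' c₀ < ε / 2 := by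
    by_cases h0 : c₀ = 0
    · obtain ⟨ρ, hρ, hρball⟩ := Metric.isOpen_iff.mp hcompl_open c₀ hc₀mem
      set ρ' : ℝ := min ρ (ε/2) with hρ'
      have hρ'pos : 0 < ρ' := lt_min hρ (half_pos hε)
      refine ⟨c₀ + (ρ'/2 : ℝ), ?_, hρball ?_, ?_⟩
      · rw [h0, zero_add]
        simp only [ne_eq, Complex.ofReal_eq_zero]
        positivity
      · rw [Metric.mem_ball, dist_self_add_left]
        calc ‖((ρ'/2 : ℝ) : ℂ)‖ = ρ'/2 := by
              rw [Complex.norm_real, Real.norm_eq_abs, abs_of_pos (by positivity)]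
        _ < ρ' := by linarith
        _ ≤ ρ := min_le_left _ _
      · rw [dist_self_add_left]
        calc ‖((ρ'/2 : ℝ) : ℂ)‖ = ρ'/2 := by
              rw [Complex.norm_real, Real.norm_eq_abs, abs_of_pos (by positivity)]
        _ ≤ ρ'/2 + 0 := by linarith
        _ < ε/2 := by
              have h1 : ρ' ≤ ε/2 := min_le_right _ _
              linarith
    · exact ⟨c₀, h0, hc₀mem, by rw [dist_self]; exact half_pos hε⟩
  refine ⟨c', hc'ne, ?_, ?_⟩
  · have := spectrum.notMem_iff.mp hc'mem
    rwa [sub_neg_eq_add, Algebra.algebraMap_eq_smul_one] at this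
  · rw [← dist_eq_norm]
    calc dist c' c ≤ dist c' c₀ + dist c₀ c := dist_triangle _ _ _
    _ < ε/2 + ε/2 := add_lt_add hc'dist (dist_comm c c₀ ▸ hc₀dist)
    _ = ε := add_halves ε

end Aux

/-- The unital subalgebra `𝓚♯(E)` of `𝓑(E)` generated by the compact operators has dense
invertibles (topological stable rank one), and consequently weakly open multiplication. -/
theorem KSharp_tsr_one_and_weakly_open
    (E : Type*) [NormedAddCommGroup E] [NormedSpace ℂ E] [CompleteSpace E] :
    Dense {a : KSharp E | IsUnit a} ∧
    ∀ x y : KSharp E, ∀ ε > 0,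
      (interior (Metric.ball x ε * Metric.ball y ε)).Nonempty := by
  have hdense : Dense {a : KSharp E | IsUnit a} := by
    rw [Metric.dense_iff]
    intro x ε hε
    obtain ⟨c, K, hKc, hTeq⟩ := x.2
    obtain ⟨c', hc'0, hc'unit, hc'dist⟩ := exists_good_scalar K hKc c hε
    obtain ⟨U, hU⟩ := hc'unit
    set V : E →L[ℂ] E := (↑U⁻¹ : E →L[ℂ] E) with hVdef
    have hUV : (c' • (1 : E →L[ℂ] E) + K) * V = 1 := by rw [← hU]; exact U.mul_inv
    have hVU : V * (c' • (1 : E →L[ℂ] E) + K) = 1 := by rw [← hU]; exact U.inv_mul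
    have hVeq : V = c'⁻¹ • (1 : E →L[ℂ] E) + (-c'⁻¹) • (K * V) := by
      have h1 : c' • V + K * V = 1 := by
        calc c' • V + K * V = (c' • (1 : E →L[ℂ] E) + K) * V := by
              rw [add_mul, smul_mul_assoc, one_mul]
        _ = 1 := hUV
      have h2 : c' • V = 1 - K * V := by
        rw [← h1]; abel
      calc V = c'⁻¹ • (c' • V) := by rw [smul_smul, inv_mul_cancel₀ hc'0, one_smul]
      _ = c'⁻¹ • ((1 : E →L[ℂ] E) - K * V) := by rw [h2]
      _ = c'⁻¹ • (1 : E →L[ℂ] E) + (-c'⁻¹) • (K * V) := by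
          rw [smul_sub, neg_smul, sub_eq_add_neg]
    have hmemT : c' • (1 : E →L[ℂ] E) + K ∈ KSharp E := ⟨c', K, hKc, rfl⟩
    have hKVcompact : IsCompactOperator (⇑((-c'⁻¹) • (K * V)) : E → E) := by
      have h1 : IsCompactOperator (⇑K ∘ ⇑V) := hKc.comp_clm V
      have := h1.smul (-c'⁻¹)
      simpa [Function.comp] using this
    have hmemV : V ∈ KSharp E := ⟨c'⁻¹, (-c'⁻¹) • (K * V), hKVcompact, hVeq⟩
    refine ⟨⟨c' • (1 : E →L[ℂ] E) + K, hmemT⟩, ?_, ?_⟩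
    · rw [Metric.mem_ball]
      have hdisteq : dist (⟨c' • (1 : E →L[ℂ] E) + K, hmemT⟩ : KSharp E) x
          = dist (c' • (1 : E →L[ℂ] E) + K) (x : E →L[ℂ] E) := rfl
      rw [hdisteq, dist_eq_norm, hTeq]
      have heq2 : (c' • (1 : E →L[ℂ] E) + K) - (c • (1 : E →L[ℂ] E) + K)
          = (c' - c) • (1 : E →L[ℂ] E) := by rw [sub_smul]; abel
      rw [heq2]
      calc ‖(c' - c) • (1 : E →L[ℂ] E)‖ ≤ ‖c' - c‖ * ‖(1 : E →L[ℂ] E)‖ := ContinuousLinearMap.opNorm_smul_le _ _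
      _ ≤ ‖c' - c‖ * 1 :=
            mul_le_mul_of_nonneg_left ContinuousLinearMap.norm_id_le (norm_nonneg _)
      _ = ‖c' - c‖ := mul_one _
      _ < ε := hc'dist
    · refine ⟨⟨⟨c' • (1 : E →L[ℂ] E) + K, hmemT⟩, ⟨V, hmemV⟩, ?_, ?_⟩, rfl⟩
      · exact Subtype.ext hUV
      · exact Subtype.ext hVU
  refine ⟨hdense, ?_⟩
  intro x y ε hε
  obtain ⟨a, haball, haunit⟩ := Metric.dense_iff.mp hdense x ε hε
  obtain ⟨u, hu⟩ := haunit
  set L : KSharp E → KSharp E := fun z => (↑u⁻¹ : KSharp E) * z with hL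
  have hopen : IsOpen (L ⁻¹' (Metric.ball y ε)) :=
    Metric.isOpen_ball.preimage (continuous_const.mul continuous_id)
  have hsub : (L ⁻¹' Metric.ball y ε) ⊆ Metric.ball x ε * Metric.ball y ε := by
    intro w hw
    have hwe : w = ↑u * ((↑u⁻¹ : KSharp E) * w) := by
      rw [← mul_assoc, u.mul_inv, one_mul]
    rw [hwe]
    exact Set.mul_mem_mul (hu ▸ haball) hw
  have hne : (L ⁻¹' Metric.ball y ε).Nonempty := by
    refine ⟨↑u * y, ?_⟩
    have : L (↑u * y) = y := by
      rw [hL]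
      simp only [← mul_assoc, u.inv_mul, one_mul]
    rw [Set.mem_preimage, this]
    exact Metric.mem_ball_self hε
  exact hne.mono (interior_maximal hsub hopen)
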